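/- arXiv:2105.02071 — 2 statements merged into one kernel-verified Lean document; each statement's English description precedes it below -/
import Mathlib

section
/- The augmented IPW functional is doubly robust at the population level: if either m̄₁ = m₁ (the true outcome regression E[Y|T=1,X]) or ē = e (the true propensity score P(T=1|X)), then E[ T·Y/ē(X) − (T − ē(X))·m̄₁(X)/ē(X) ] = E[Y(1)], provided ē(X) ≥ c > 0 almost surely and relevant integrability holds. -/
open MeasureTheory ProbabilityTheory

set_option maxHeartbeats 1000000

open Filter Set in

lemma aux_setIntegral_indep {Ω : Type*} {𝒢 m₁ : MeasurableSpace Ω} {mΩ : MeasurableSpace Ω}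
    (μ : Measure Ω) [IsProbabilityMeasure μ]
    (h𝒢 : 𝒢 ≤ mΩ) {A : Set Ω} (hA : MeasurableSet[mΩ] A)
    (hm₁ : m₁ ≤ mΩ)
    (hkey : ∀ t : Set Ω, MeasurableSet[m₁] t →
      (μ⟦t ∩ A | 𝒢⟧) =ᵐ[μ] fun ω => (μ⟦t | 𝒢⟧) ω * (μ⟦A | 𝒢⟧) ω)
    {f : Ω → ℝ} (hfint : Integrable f μ) (hfm : StronglyMeasurable[m₁] f)
    {G : Set Ω} (hG : MeasurableSet[𝒢] G) :
    ∫ ω in G ∩ A, f ω ∂μ = ∫ ω in G, f ω * (μ⟦A | 𝒢⟧) ω ∂μ := by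
  set W : Ω → ℝ := μ⟦A | 𝒢⟧ with hW
  have hGΩ : MeasurableSet[mΩ] G := h𝒢 G hG
  have hWsm : StronglyMeasurable[𝒢] W := stronglyMeasurable_condExp
  have hWint : Integrable W μ := integrable_condExp
  have hWbd : ∀ᵐ ω ∂μ, ‖W ω‖ ≤ 1 := by
    have h0 : 0 ≤ᵐ[μ] W :=
      condExp_nonneg (Eventually.of_forall fun ω => Set.indicator_nonneg (fun _ _ => zero_le_one) ω)
    have h1 : W ≤ᵐ[μ] μ[fun _ => (1:ℝ) | 𝒢] :=
      condExp_mono ((integrable_const (1:ℝ)).indicator hA) (integrable_const 1)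
        (Eventually.of_forall fun ω => Set.indicator_le_self' (fun _ _ => zero_le_one) ω)
    rw [condExp_const h𝒢] at h1
    filter_upwards [h0, h1] with ω h0 h1
    rw [Real.norm_eq_abs, abs_le]
    exact ⟨by simp only [Pi.zero_apply] at h0; linarith, h1⟩
  have hmulint : ∀ {h : Ω → ℝ}, Integrable h μ → Integrable (fun ω => h ω * W ω) μ := by
    intro h hh
    exact (hh.bdd_mul (hWsm.mono h𝒢).aestronglyMeasurable hWbd).congr
      (Eventually.of_forall fun ω => mul_comm _ _)
  set P : (Ω → ℝ) → Prop :=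
    fun f => ∫ ω in G ∩ A, f ω ∂μ = ∫ ω in G, f ω * W ω ∂μ with hP
  have main : ∀ ⦃g : Ω → ℝ⦄, MemLp g 1 μ → AEStronglyMeasurable[m₁] g μ → P g := by
    refine MemLp.induction_stronglyMeasurable hm₁ ENNReal.one_ne_top P ?_ ?_ ?_ ?_
    · -- indicator case
      intro c s hs _
      have hsΩ : MeasurableSet[mΩ] s := hm₁ s hs
      have h1s : Integrable (s.indicator fun _ => (1:ℝ)) μ := (integrable_const 1).indicator hsΩ
      have hWs : Integrable (W * s.indicator fun _ => (1:ℝ)) μ :=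
        h1s.bdd_mul (hWsm.mono h𝒢).aestronglyMeasurable hWbd
      have hpull : μ[W * s.indicator fun _ => (1:ℝ) | 𝒢]
          =ᵐ[μ] W * μ[s.indicator fun _ => (1:ℝ) | 𝒢] :=
        condExp_mul_of_stronglyMeasurable_left hWsm hWs h1s
      have hkey' := hkey s hs
      have hWvalue : ∫ ω in G ∩ s, W ω ∂μ = (μ (G ∩ (s ∩ A))).toReal := by
        have e1 : ∫ ω in G ∩ s, W ω ∂μ = ∫ ω in G, (W * s.indicator fun _ => (1:ℝ)) ω ∂μ := by
          rw [← setIntegral_indicator hsΩ]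
          refine setIntegral_congr_fun hGΩ fun ω _ => ?_
          by_cases h : ω ∈ s <;> simp [h]
        have e2 : ∫ ω in G, (W * s.indicator fun _ => (1:ℝ)) ω ∂μ
            = ∫ ω in G, (μ[W * s.indicator fun _ => (1:ℝ) | 𝒢]) ω ∂μ :=
          (setIntegral_condExp h𝒢 hWs hG).symm
        have e3 : ∫ ω in G, (μ[W * s.indicator fun _ => (1:ℝ) | 𝒢]) ω ∂μ
            = ∫ ω in G, (μ⟦s ∩ A | 𝒢⟧) ω ∂μ := by
          refine setIntegral_congr_ae hGΩ ?_
          filter_upwards [hpull, hkey'] with ω h1 h2 _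
          rw [h1]
          simp only [Pi.mul_apply]
          rw [h2, mul_comm]
        have e4 : ∫ ω in G, (μ⟦s ∩ A | 𝒢⟧) ω ∂μ = (μ (G ∩ (s ∩ A))).toReal := by
          rw [setIntegral_condExp h𝒢 ((integrable_const (1:ℝ)).indicator (hsΩ.inter hA)) hG,
            setIntegral_indicator (hsΩ.inter hA), setIntegral_const, smul_eq_mul, mul_one, measureReal_def]
        rw [e1, e2, e3, e4]
      simp only [hP]
      have lhs : ∫ ω in G ∩ A, s.indicator (fun _ => c) ω ∂μ = (μ (G ∩ (s ∩ A))).toReal * c := by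
        have hset : (G ∩ A) ∩ s = G ∩ (s ∩ A) := by
          ext x; simp only [Set.mem_inter_iff]; tauto
        rw [setIntegral_indicator hsΩ, hset, setIntegral_const, smul_eq_mul, measureReal_def]
      have rhs : ∫ ω in G, s.indicator (fun _ => c) ω * W ω ∂μ = c * ∫ ω in G ∩ s, W ω ∂μ := by
        have : (fun ω => s.indicator (fun _ => c) ω * W ω) = s.indicator fun ω => c * W ω := by
          funext ω; by_cases h : ω ∈ s <;> simp [h]
        rw [this, setIntegral_indicator hsΩ, integral_const_mul]
      rw [lhs, rhs, hWvalue, mul_comm]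
    · -- additivity
      intro u v _ hu hv _ _ hPu hPv
      have hui := memLp_one_iff_integrable.1 hu
      have hvi := memLp_one_iff_integrable.1 hv
      simp only [hP]
      have l1 : ∫ ω in G ∩ A, (u + v) ω ∂μ
          = ∫ ω in G ∩ A, u ω ∂μ + ∫ ω in G ∩ A, v ω ∂μ :=
        integral_add hui.integrableOn hvi.integrableOn
      have l2 : ∫ ω in G, (u + v) ω * W ω ∂μ
          = ∫ ω in G, u ω * W ω ∂μ + ∫ ω in G, v ω * W ω ∂μ := by
        rw [← integral_add (hmulint hui).integrableOn (hmulint hvi).integrableOn]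
        refine setIntegral_congr_fun hGΩ fun ω _ => ?_
        simp [add_mul]
      rw [l1, l2, hPu, hPv]
    · -- closedness
      have hcont2 : Continuous fun g : Lp ℝ 1 μ => ∫ ω in G, g ω * W ω ∂μ := by
        have hint : ∀ g : Lp ℝ 1 μ, Integrable (fun ω => g ω * W ω) μ :=
          fun g => hmulint (L1.integrable_coeFn g)
        refine (LipschitzWith.of_dist_le_mul (fun g₁ g₂ => ?_) :
          LipschitzWith 1 (fun g : Lp ℝ 1 μ => ∫ ω in G, g ω * W ω ∂μ)).continuous
        rw [dist_eq_norm, ← integral_sub (hint g₁).integrableOn (hint g₂).integrableOn]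
        have key : ∀ᵐ ω ∂μ, ‖g₁ ω * W ω - g₂ ω * W ω‖ ≤ ‖(↑↑(g₁ - g₂) : Ω → ℝ) ω‖ := by
          filter_upwards [hWbd, Lp.coeFn_sub g₁ g₂] with ω hw hsub
          rw [hsub]
          simp only [Pi.sub_apply, ← sub_mul, norm_mul]
          calc ‖g₁ ω - g₂ ω‖ * ‖W ω‖ ≤ ‖g₁ ω - g₂ ω‖ * 1 :=
            mul_le_mul_of_nonneg_left hw (norm_nonneg _)
          _ = ‖g₁ ω - g₂ ω‖ := mul_one _
        calc ‖∫ ω in G, (g₁ ω * W ω - g₂ ω * W ω) ∂μ‖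
            ≤ ∫ ω in G, ‖g₁ ω * W ω - g₂ ω * W ω‖ ∂μ := by
              exact (norm_integral_le_integral_norm _)
          _ ≤ ∫ ω in G, ‖(↑↑(g₁ - g₂) : Ω → ℝ) ω‖ ∂μ := by
              refine integral_mono_ae (((hint g₁).sub (hint g₂)).norm.integrableOn)
                ((L1.integrable_coeFn (g₁ - g₂)).norm.integrableOn) ?_
              exact ae_restrict_of_ae key
          _ ≤ ∫ ω, ‖(↑↑(g₁ - g₂) : Ω → ℝ) ω‖ ∂μ :=
              setIntegral_le_integral (L1.integrable_coeFn (g₁ - g₂)).norm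
                (Eventually.of_forall fun ω => norm_nonneg _)
          _ = ‖g₁ - g₂‖ := (L1.norm_eq_integral_norm _).symm
          _ = 1 * dist g₁ g₂ := by rw [one_mul, dist_eq_norm]
      have hcont1 : Continuous fun g : Lp ℝ 1 μ => ∫ ω in G ∩ A, g ω ∂μ :=
        continuous_setIntegral _
      exact isClosed_eq
        (hcont1.comp (ContinuousLinearMap.continuous (Submodule.subtypeL _)))
        (hcont2.comp (ContinuousLinearMap.continuous (Submodule.subtypeL _)))
    · -- ae congruence
      intro u v huv hu hPu
      simp only [hP]
      have l1 : ∫ ω in G ∩ A, v ω ∂μ = ∫ ω in G ∩ A, u ω ∂μ :=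
        integral_congr_ae (ae_restrict_of_ae huv.symm)
      have l2 : ∫ ω in G, v ω * W ω ∂μ = ∫ ω in G, u ω * W ω ∂μ :=
        integral_congr_ae (ae_restrict_of_ae (huv.symm.mul EventuallyEq.rfl))
      rw [l1, l2, hPu]
  exact main (memLp_one_iff_integrable.2 hfint) hfm.aestronglyMeasurable

open Filter Set in

theorem stmt5_aux {Ω : Type*} {𝒢 : MeasurableSpace Ω} {mΩ : MeasurableSpace Ω}
    [StandardBorelSpace Ω]
    (μ : Measure Ω) [IsProbabilityMeasure μ]
    (h𝒢 : 𝒢 ≤ mΩ)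
    (Y1 Y0 T Y m1 m1bar ebar : Ω → ℝ) (c : ℝ) (hc : 0 < c)
    (hTbin : ∀ ω, T ω = 0 ∨ T ω = 1)
    (hcons : ∀ ω, Y ω = T ω * Y1 ω + (1 - T ω) * Y0 ω)
    (hunconf : CondIndepFun 𝒢 h𝒢 Y1 T μ)
    (he_pos : ∀ᵐ ω ∂μ, c ≤ (μ[T | 𝒢]) ω)
    (hm1_meas : StronglyMeasurable[𝒢] m1)
    (hm1 : μ[fun ω => T ω * Y ω | 𝒢] =ᵐ[μ] fun ω => m1 ω * (μ[T | 𝒢]) ω)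
    (hm1bar_meas : StronglyMeasurable[𝒢] m1bar)
    (hebar_meas : StronglyMeasurable[𝒢] ebar)
    (hebar_pos : ∀ᵐ ω ∂μ, c ≤ ebar ω)
    (hDR : (m1bar =ᵐ[μ] m1) ∨ (ebar =ᵐ[μ] fun ω => (μ[T | 𝒢]) ω))
    (hY1int : Integrable Y1 μ)
    (hTYint : Integrable (fun ω => T ω * Y ω) μ)
    (hm1int : Integrable m1 μ) (hm1barint : Integrable m1bar μ)
    (hAIPWint : Integrable
      (fun ω => T ω * Y ω / ebar ω - (T ω - ebar ω) * m1bar ω / ebar ω) μ) :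
    ∫ ω, (T ω * Y ω / ebar ω - (T ω - ebar ω) * m1bar ω / ebar ω) ∂μ
      = ∫ ω, Y1 ω ∂μ := by
  -- Step 1: T is integrable (otherwise the conditional expectation is 0, contradicting he_pos)
  have hTint : Integrable T μ := by
    by_contra h
    have h0 : μ[T | 𝒢] = 0 := condExp_of_not_integrable h
    have hFalse : ∀ᵐ _ω ∂μ, False := by
      filter_upwards [he_pos] with ω hω
      rw [h0] at hω
      simp only [Pi.zero_apply] at hω
      linarith
    haveI : (ae μ).NeBot := ae_neBot.mpr (IsProbabilityMeasure.ne_zero μ)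
    exact hFalse.exists.choose_spec
  -- measurable versions
  obtain ⟨T', hT'sm, hT'ae⟩ := hTint.1
  obtain ⟨Y1', hY1'sm, hY1'ae⟩ := hY1int.1
  have hA : MeasurableSet[mΩ] (T' ⁻¹' {1}) := hT'sm.measurable (measurableSet_singleton 1)
  set A : Set Ω := T' ⁻¹' {1} with hA_def
  have hTA : T =ᵐ[μ] A.indicator (fun _ => (1:ℝ)) := by
    filter_upwards [hT'ae] with ω hω
    rcases hTbin ω with h | h
    · have hmem : ω ∉ A := by simp [hA_def, ← hω, h]
      simp [Set.indicator_of_notMem hmem, h]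
    · have hmem : ω ∈ A := by simp [hA_def, ← hω, h]
      simp [Set.indicator_of_mem hmem, h]
  -- Step 2: transfer conditional independence to measurable versions
  have hnull : ∀ (N : Set Ω), MeasurableSet[mΩ] N → μ N = 0 →
      ∀ᵐ ω ∂(μ.trim h𝒢), condExpKernel μ 𝒢 ω N = 0 := by
    intro N hN hμN
    have h1 := condExpKernel_ae_eq_trim_condExp (μ := μ) h𝒢 hN
    have hind : (N.indicator (fun _ => (1:ℝ))) =ᵐ[μ] (0 : Ω → ℝ) := by
      have := measure_eq_zero_iff_ae_notMem.mp hμN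
      filter_upwards [this] with ω hω
      simp [Set.indicator_of_notMem hω]
    have h2 : (μ⟦N | 𝒢⟧) =ᵐ[μ] (0 : Ω → ℝ) :=
      (condExp_congr_ae hind).trans (by rw [condExp_zero])
    have h2' : (μ⟦N | 𝒢⟧) =ᵐ[μ.trim h𝒢] (0 : Ω → ℝ) :=
      (StronglyMeasurable.ae_eq_trim_iff h𝒢 stronglyMeasurable_condExp stronglyMeasurable_const).mpr h2
    filter_upwards [h1, h2'] with ω hω1 hω2
    have htr : (condExpKernel μ 𝒢 ω N).toReal = 0 := by
      rw [← measureReal_def, hω1]; simpa using hω2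
    rcases (ENNReal.toReal_eq_zero_iff _).1 htr with h | h
    · exact h
    · exact absurd h (measure_ne_top _ _)
  have hae : ∀ {f f' : Ω → ℝ}, f =ᵐ[μ] f' →
      ∀ᵐ ω ∂(μ.trim h𝒢), f =ᵐ[condExpKernel μ 𝒢 ω] f' := by
    intro f f' hff'
    have hnull0 : μ {x | ¬ f x = f' x} = 0 := ae_iff.mp hff'
    obtain ⟨N, hNsub, hNmeas, hNnull⟩ := exists_measurable_superset_of_null hnull0
    filter_upwards [hnull N hNmeas hNnull] with ω hω
    have : condExpKernel μ 𝒢 ω {x | f x ≠ f' x} = 0 := measure_mono_null hNsub hω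
    exact this
  have hCI : CondIndepFun 𝒢 h𝒢 Y1' (A.indicator fun _ => (1:ℝ)) μ :=
    Kernel.IndepFun.congr' hunconf (hae hY1'ae) (hae hTA)
  -- Step 3: the product formula for sets
  have hpre : (A.indicator fun _ => (1:ℝ)) ⁻¹' {1} = A := by
    ext x; by_cases h : x ∈ A <;> simp [h]
  have hkey : ∀ t : Set Ω, MeasurableSet[MeasurableSpace.comap Y1' inferInstance] t →
      (μ⟦t ∩ A | 𝒢⟧) =ᵐ[μ] fun ω => (μ⟦t | 𝒢⟧) ω * (μ⟦A | 𝒢⟧) ω := by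
    rintro t ⟨s, hs, rfl⟩
    have h := ((condIndepFun_iff_condExp_inter_preimage_eq_mul hY1'sm.measurable
      (measurable_const.indicator hA)).mp hCI) s {1} hs (measurableSet_singleton 1)
    rwa [hpre] at h
  -- Step 4: integrate Y1' against the indicator
  have hY1'int : Integrable Y1' μ := hY1int.congr hY1'ae
  have hY1'm₁ : StronglyMeasurable[MeasurableSpace.comap Y1' inferInstance] Y1' :=
    (show Measurable[MeasurableSpace.comap Y1' inferInstance] Y1' from fun s hs => ⟨s, hs, rfl⟩).stronglyMeasurable
  have haux : ∀ {G : Set Ω}, MeasurableSet[𝒢] G →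
      ∫ ω in G ∩ A, Y1' ω ∂μ = ∫ ω in G, Y1' ω * (μ⟦A | 𝒢⟧) ω ∂μ :=
    fun {G} hG => aux_setIntegral_indep μ h𝒢 hA hY1'sm.measurable.comap_le hkey hY1'int hY1'm₁ hG
  -- Step 5: condExp product identity
  have hWsm : StronglyMeasurable[𝒢] (μ⟦A | 𝒢⟧) := stronglyMeasurable_condExp
  have hWbd : ∀ᵐ ω ∂μ, ‖(μ⟦A | 𝒢⟧) ω‖ ≤ 1 := by
    have h0 : (0 : Ω → ℝ) ≤ᵐ[μ] μ⟦A | 𝒢⟧ :=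
      condExp_nonneg (Eventually.of_forall fun ω => Set.indicator_nonneg (fun _ _ => zero_le_one) ω)
    have h1 : (μ⟦A | 𝒢⟧) ≤ᵐ[μ] μ[fun _ => (1:ℝ) | 𝒢] :=
      condExp_mono ((integrable_const (1:ℝ)).indicator hA) (integrable_const 1)
        (Eventually.of_forall fun ω => Set.indicator_le_self' (fun _ _ => zero_le_one) ω)
    rw [condExp_const h𝒢] at h1
    filter_upwards [h0, h1] with ω ha hb
    simp only [Pi.zero_apply] at ha
    rw [Real.norm_eq_abs, abs_le]
    exact ⟨by linarith, hb⟩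
  have hWY1'int : Integrable ((μ⟦A | 𝒢⟧) * Y1') μ :=
    hY1'int.bdd_mul (hWsm.mono h𝒢).aestronglyMeasurable hWbd
  have hpull : μ[(μ⟦A | 𝒢⟧) * Y1' | 𝒢] =ᵐ[μ] (μ⟦A | 𝒢⟧) * μ[Y1' | 𝒢] :=
    condExp_mul_of_stronglyMeasurable_left hWsm hWY1'int hY1'int
  set F : Ω → ℝ := A.indicator Y1' with hF_def
  have hFTY : (fun ω => T ω * Y ω) =ᵐ[μ] F := by
    have hTY : ∀ ω, T ω * Y ω = T ω * Y1 ω := by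
      intro ω
      rcases hTbin ω with h | h
      · simp [h]
      · simp [hcons ω, h]
    filter_upwards [hTA, hY1'ae] with ω h1 h2
    rw [hTY ω, h1, h2]
    by_cases h : ω ∈ A <;> simp [hF_def, h]
  have hFint : Integrable F μ := hTYint.congr hFTY
  have hgint : Integrable (fun ω => (μ⟦A | 𝒢⟧) ω * (μ[Y1' | 𝒢]) ω) μ :=
    integrable_condExp.bdd_mul (hWsm.mono h𝒢).aestronglyMeasurable hWbd
  have hcondF : (fun ω => (μ⟦A | 𝒢⟧) ω * (μ[Y1' | 𝒢]) ω) =ᵐ[μ] μ[F | 𝒢] := by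
    refine ae_eq_condExp_of_forall_setIntegral_eq h𝒢 hFint
      (fun s _ _ => hgint.integrableOn) (fun s hs _ => ?_)
      (stronglyMeasurable_condExp.mul stronglyMeasurable_condExp).aestronglyMeasurable
    calc ∫ ω in s, (μ⟦A | 𝒢⟧) ω * (μ[Y1' | 𝒢]) ω ∂μ
        = ∫ ω in s, (μ[(μ⟦A | 𝒢⟧) * Y1' | 𝒢]) ω ∂μ := by
          refine setIntegral_congr_ae (h𝒢 s hs) ?_
          filter_upwards [hpull] with ω hω _
          rw [hω]; rfl
      _ = ∫ ω in s, ((μ⟦A | 𝒢⟧) * Y1') ω ∂μ := setIntegral_condExp h𝒢 hWY1'int hs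
      _ = ∫ ω in s, Y1' ω * (μ⟦A | 𝒢⟧) ω ∂μ := by
          refine setIntegral_congr_ae (h𝒢 s hs) ?_
          exact Eventually.of_forall fun ω _ => mul_comm _ _
      _ = ∫ ω in s ∩ A, Y1' ω ∂μ := (haux hs).symm
      _ = ∫ ω in s, F ω ∂μ := (setIntegral_indicator hA).symm
  -- Step 6: identify m1 with μ[Y1|𝒢]
  have hWe : (μ⟦A | 𝒢⟧) =ᵐ[μ] μ[T | 𝒢] := condExp_congr_ae hTA.symm
  have hY1'ce : μ[Y1' | 𝒢] =ᵐ[μ] μ[Y1 | 𝒢] := condExp_congr_ae hY1'ae.symm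
  have hm1e : (fun ω => m1 ω * (μ[T | 𝒢]) ω) =ᵐ[μ] fun ω => (μ[Y1 | 𝒢]) ω * (μ[T | 𝒢]) ω := by
    have step : μ[fun ω => T ω * Y ω | 𝒢] =ᵐ[μ] fun ω => (μ[Y1 | 𝒢]) ω * (μ[T | 𝒢]) ω := by
      calc μ[fun ω => T ω * Y ω | 𝒢] =ᵐ[μ] μ[F | 𝒢] := condExp_congr_ae hFTY
        _ =ᵐ[μ] fun ω => (μ⟦A | 𝒢⟧) ω * (μ[Y1' | 𝒢]) ω := hcondF.symm
        _ =ᵐ[μ] fun ω => (μ[Y1 | 𝒢]) ω * (μ[T | 𝒢]) ω := by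
            filter_upwards [hWe, hY1'ce] with ω h1 h2
            rw [h1, h2, mul_comm]
    exact hm1.symm.trans step
  have hm1Y1 : m1 =ᵐ[μ] μ[Y1 | 𝒢] := by
    filter_upwards [hm1e, he_pos] with ω h1 h2
    exact mul_right_cancel₀ (ne_of_gt (lt_of_lt_of_le hc h2)) h1
  have hintm1 : ∫ ω, m1 ω ∂μ = ∫ ω, Y1 ω ∂μ := by
    rw [integral_congr_ae hm1Y1, integral_condExp h𝒢]
  -- Step 7: the AIPW integrand
  have hebar_ne : ∀ᵐ ω ∂μ, ebar ω ≠ 0 := by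
    filter_upwards [hebar_pos] with ω h
    exact ne_of_gt (lt_of_lt_of_le hc h)
  have hinv_bd : ∀ᵐ ω ∂μ, ‖(ebar ω)⁻¹‖ ≤ c⁻¹ := by
    filter_upwards [hebar_pos] with ω h
    rw [Real.norm_eq_abs, abs_of_nonneg (inv_nonneg.mpr (le_of_lt (lt_of_lt_of_le hc h)))]
    exact inv_anti₀ hc h
  have hinv_sm : StronglyMeasurable[𝒢] (fun ω => (ebar ω)⁻¹) :=
    hebar_meas.measurable.inv.stronglyMeasurable
  have hinv_aesm : AEStronglyMeasurable (fun ω => (ebar ω)⁻¹) μ :=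
    (hinv_sm.mono h𝒢).aestronglyMeasurable
  have hf1int : Integrable (fun ω => (ebar ω)⁻¹ * (T ω * Y ω)) μ :=
    hTYint.bdd_mul hinv_aesm hinv_bd
  have hf2aint : Integrable (fun ω => (ebar ω)⁻¹ * m1bar ω) μ :=
    hm1barint.bdd_mul hinv_aesm hinv_bd
  have hTbd : ∀ᵐ ω ∂μ, ‖T ω‖ ≤ 1 := by
    refine Eventually.of_forall fun ω => ?_
    rcases hTbin ω with h | h <;> simp [h]
  have hf2int : Integrable (fun ω => ((ebar ω)⁻¹ * m1bar ω) * T ω) μ := by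
    have := hf2aint.bdd_mul hTint.1 hTbd
    exact this.congr (Eventually.of_forall fun ω => mul_comm _ _)
  have hce1 : μ[fun ω => (ebar ω)⁻¹ * (T ω * Y ω) | 𝒢]
      =ᵐ[μ] fun ω => (ebar ω)⁻¹ * (μ[fun ω => T ω * Y ω | 𝒢]) ω :=
    condExp_mul_of_stronglyMeasurable_left hinv_sm hf1int hTYint
  have hce2 : μ[fun ω => ((ebar ω)⁻¹ * m1bar ω) * T ω | 𝒢]
      =ᵐ[μ] fun ω => ((ebar ω)⁻¹ * m1bar ω) * (μ[T | 𝒢]) ω :=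
    condExp_mul_of_stronglyMeasurable_left (hinv_sm.mul hm1bar_meas) hf2int hTint
  have hce3 : μ[m1bar | 𝒢] = m1bar := condExp_of_stronglyMeasurable h𝒢 hm1bar_meas hm1barint
  have hg_eq : (fun ω => T ω * Y ω / ebar ω - (T ω - ebar ω) * m1bar ω / ebar ω)
      =ᵐ[μ] (fun ω => (ebar ω)⁻¹ * (T ω * Y ω)) - (fun ω => ((ebar ω)⁻¹ * m1bar ω) * T ω)
        + m1bar := by
    filter_upwards [hebar_ne] with ω h
    simp only [Pi.add_apply, Pi.sub_apply]
    field_simp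
    ring
  have hsubint : Integrable ((fun ω => (ebar ω)⁻¹ * (T ω * Y ω))
      - fun ω => ((ebar ω)⁻¹ * m1bar ω) * T ω) μ := hf1int.sub hf2int
  have hsum : μ[(fun ω => (ebar ω)⁻¹ * (T ω * Y ω)) - (fun ω => ((ebar ω)⁻¹ * m1bar ω) * T ω)
        + m1bar | 𝒢]
      =ᵐ[μ] μ[(fun ω => (ebar ω)⁻¹ * (T ω * Y ω)) - fun ω => ((ebar ω)⁻¹ * m1bar ω) * T ω | 𝒢]
        + μ[m1bar | 𝒢] := condExp_add hsubint hm1barint 𝒢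
  have hsub : μ[(fun ω => (ebar ω)⁻¹ * (T ω * Y ω)) - fun ω => ((ebar ω)⁻¹ * m1bar ω) * T ω | 𝒢]
      =ᵐ[μ] μ[fun ω => (ebar ω)⁻¹ * (T ω * Y ω) | 𝒢] - μ[fun ω => ((ebar ω)⁻¹ * m1bar ω) * T ω | 𝒢] :=
    condExp_sub hf1int hf2int 𝒢
  -- combine everything into: μ[AIPW|𝒢] =ᵐ m1
  have hAIPWce : μ[fun ω => T ω * Y ω / ebar ω - (T ω - ebar ω) * m1bar ω / ebar ω | 𝒢]
      =ᵐ[μ] m1 := by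
    have base := (condExp_congr_ae hg_eq).trans (hsum.trans (EventuallyEq.add hsub EventuallyEq.rfl))
    -- base : μ[AIPW|𝒢] =ᵐ (μ[f1|𝒢] - μ[f2|𝒢]) + μ[m1bar|𝒢]
    refine base.trans ?_
    have h1 := hce1
    have h2 := hce2
    rcases hDR with hbar | hbar
    · filter_upwards [h1, h2, hm1, hebar_ne, hbar] with ω e1 e2 e3 e4 e5
      simp only [Pi.add_apply, Pi.sub_apply, Pi.mul_apply] at e1 e2 ⊢
      rw [e1, e2, hce3, e3, e5]
      field_simp
      ring
    · filter_upwards [h1, h2, hm1, hebar_ne, hbar] with ω e1 e2 e3 e4 e5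
      simp only [Pi.add_apply, Pi.sub_apply, Pi.mul_apply] at e1 e2 ⊢
      rw [e1, e2, hce3, e3, e5]
      rw [e5] at e4
      field_simp
      ring
  calc ∫ ω, (T ω * Y ω / ebar ω - (T ω - ebar ω) * m1bar ω / ebar ω) ∂μ
      = ∫ ω, (μ[fun ω => T ω * Y ω / ebar ω - (T ω - ebar ω) * m1bar ω / ebar ω | 𝒢]) ω ∂μ :=
        (integral_condExp h𝒢).symm
    _ = ∫ ω, m1 ω ∂μ := integral_congr_ae hAIPWce
    _ = ∫ ω, Y1 ω ∂μ := hintm1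


/-- Population double robustness of the AIPW functional: with true propensity score
`e = E[T|𝒢]` and true outcome regression `m₁` (characterized by `E[TY|𝒢] = m₁ e` a.e.),
and working models `m̄₁, ē` which are `𝒢`-measurable with `ē ≥ c > 0` a.s., if either
`m̄₁ = m₁` a.e. or `ē = e` a.e., then
`E[T·Y/ē(X) − (T − ē(X))·m̄₁(X)/ē(X)] = E[Y(1)]`. -/
theorem stmt_5 {Ω : Type*} {mΩ : MeasurableSpace Ω} [StandardBorelSpace Ω]
    (μ : Measure Ω) [IsProbabilityMeasure μ]
    (𝒢 : MeasurableSpace Ω) (h𝒢 : 𝒢 ≤ mΩ)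
    (Y1 Y0 T Y m1 m1bar ebar : Ω → ℝ) (c : ℝ) (hc : 0 < c)
    (hTbin : ∀ ω, T ω = 0 ∨ T ω = 1)
    (hcons : ∀ ω, Y ω = T ω * Y1 ω + (1 - T ω) * Y0 ω)
    (hunconf : CondIndepFun 𝒢 h𝒢 Y1 T μ)
    (he_pos : ∀ᵐ ω ∂μ, c ≤ (μ[T | 𝒢]) ω)
    (hm1_meas : StronglyMeasurable[𝒢] m1)
    (hm1 : μ[fun ω => T ω * Y ω | 𝒢] =ᵐ[μ] fun ω => m1 ω * (μ[T | 𝒢]) ω)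
    (hm1bar_meas : StronglyMeasurable[𝒢] m1bar)
    (hebar_meas : StronglyMeasurable[𝒢] ebar)
    (hebar_pos : ∀ᵐ ω ∂μ, c ≤ ebar ω)
    (hDR : (m1bar =ᵐ[μ] m1) ∨ (ebar =ᵐ[μ] fun ω => (μ[T | 𝒢]) ω))
    (hY1int : Integrable Y1 μ)
    (hTYint : Integrable (fun ω => T ω * Y ω) μ)
    (hm1int : Integrable m1 μ) (hm1barint : Integrable m1bar μ)
    (hAIPWint : Integrable
      (fun ω => T ω * Y ω / ebar ω - (T ω - ebar ω) * m1bar ω / ebar ω) μ) :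
    ∫ ω, (T ω * Y ω / ebar ω - (T ω - ebar ω) * m1bar ω / ebar ω) ∂μ
      = ∫ ω, Y1 ω ∂μ := by
  exact stmt5_aux μ h𝒢 Y1 Y0 T Y m1 m1bar ebar c hc hTbin hcons hunconf he_pos hm1_meas hm1
    hm1bar_meas hebar_meas hebar_pos hDR hY1int hTYint hm1int hm1barint hAIPWint
end

section
/- The population bias of the AIPW functional using working models (m̄₁, ē) equals E[ ((e(X) − ē(X))/ē(X)) · (m₁(X) − m̄₁(X)) ], a product of the two model errors; hence it is bounded by c⁻¹ · E[(e(X)−ē(X))²]^{1/2} · E[(m₁(X)−m̄₁(X))²]^{1/2} when ē(X) ≥ c > 0. -/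
open MeasureTheory ProbabilityTheory Set Filter

/-- Key auxiliary lemma: if `Y1` is conditionally independent of a binary `T` given `𝒢`,
then the conditional expectation of the product factorizes. -/
lemma condexp_mul_of_condIndep {Ω : Type*} {𝒢 : MeasurableSpace Ω} {mΩ : MeasurableSpace Ω}
    [StandardBorelSpace Ω]
    (μ : Measure Ω) [IsProbabilityMeasure μ]
    (h𝒢 : 𝒢 ≤ mΩ)
    (Y1 T : Ω → ℝ) (hTbin : ∀ ω, T ω = 0 ∨ T ω = 1)
    (hunconf : ProbabilityTheory.CondIndepFun 𝒢 h𝒢 Y1 T μ)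
    (hY1int : Integrable Y1 μ) (hTint : Integrable T μ)
    (hTY1int : Integrable (fun ω => T ω * Y1 ω) μ) :
    μ[fun ω => T ω * Y1 ω | 𝒢] =ᵐ[μ] fun ω => (μ[T | 𝒢]) ω * (μ[Y1 | 𝒢]) ω := by
  set κ := condExpKernel (mΩ := mΩ) μ 𝒢 with hκ
  -- measurable modifications
  have hTm := hTint.1
  have hYm := hY1int.1
  set T' := hTm.mk T with hT'def
  set f' := hYm.mk Y1 with hf'def
  have hT'meas : StronglyMeasurable T' := hTm.stronglyMeasurable_mk
  have hf'meas : StronglyMeasurable f' := hYm.stronglyMeasurable_mk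
  have hTT' : T =ᵐ[μ] T' := hTm.ae_eq_mk
  have hYf' : Y1 =ᵐ[μ] f' := hYm.ae_eq_mk
  set A : Set Ω := T' ⁻¹' {1} with hAdef
  have hAmeas : MeasurableSet A := hT'meas.measurable (measurableSet_singleton 1)
  -- a null set outside of which everything is nice
  set N : Set Ω := toMeasurable μ ({ω | T ω ≠ T' ω} ∪ {ω | Y1 ω ≠ f' ω}) with hNdef
  have hNmeas : MeasurableSet N := measurableSet_toMeasurable _ _
  have hNnull : μ N = 0 := by
    rw [hNdef, measure_toMeasurable]
    exact measure_union_null (ae_iff.mp hTT') (ae_iff.mp hYf')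
  have hout : ∀ x, x ∉ N → T x = T' x ∧ Y1 x = f' x := by
    intro x hx
    have hx' : x ∉ ({ω | T ω ≠ T' ω} ∪ {ω | Y1 ω ≠ f' ω}) :=
      fun h => hx (subset_toMeasurable μ _ h)
    constructor
    · by_contra h; exact hx' (Or.inl h)
    · by_contra h; exact hx' (Or.inr h)
  -- κ ω N = 0 a.e.
  have hκN : ∀ᵐ ω ∂μ, κ ω N = 0 := by
    have h1 : (fun ω => (κ ω N).toReal) =ᵐ[μ] μ⟦N | 𝒢⟧ :=
      condExpKernel_ae_eq_condExp h𝒢 hNmeas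
    have h2 : (N.indicator (fun _ => (1 : ℝ))) =ᵐ[μ] (0 : Ω → ℝ) := by
      filter_upwards [measure_eq_zero_iff_ae_notMem.mp hNnull] with x hx
      simp [hx]
    have h3 : (μ⟦N | 𝒢⟧) =ᵐ[μ] 0 := by
      refine (condExp_congr_ae h2).trans ?_
      simp [condExp_zero]
    filter_upwards [h1.trans h3] with ω hω
    have hfin : κ ω N ≠ ⊤ := measure_ne_top _ _
    simpa [ENNReal.toReal_eq_zero_iff, hfin] using hω
  -- conditional independence gives the product rule on a countable π-system
  have hindep' : ∀ᵐ ω ∂μ, ∀ q : ℚ, κ ω (Y1 ⁻¹' Iic (q : ℝ) ∩ T ⁻¹' {1})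
      = κ ω (Y1 ⁻¹' Iic (q : ℝ)) * κ ω (T ⁻¹' {1}) := by
    rw [ae_all_iff]
    intro q
    exact ae_of_ae_trim h𝒢 (hunconf _ _ ⟨Iic (q : ℝ), measurableSet_Iic, rfl⟩
      ⟨{1}, measurableSet_singleton 1, rfl⟩)
  have hTcond : μ[T | 𝒢] =ᵐ[μ] fun ω => ∫ y, T y ∂(κ ω) :=
    condExp_ae_eq_integral_condExpKernel h𝒢 hTint
  have hYcond : μ[Y1 | 𝒢] =ᵐ[μ] fun ω => ∫ y, Y1 y ∂(κ ω) :=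
    condExp_ae_eq_integral_condExpKernel h𝒢 hY1int
  have hTYcond : μ[fun ω => T ω * Y1 ω | 𝒢] =ᵐ[μ] fun ω => ∫ y, T y * Y1 y ∂(κ ω) :=
    condExp_ae_eq_integral_condExpKernel h𝒢 hTY1int
  filter_upwards [hκN, hindep', hTcond, hYcond, hTYcond] with ω hωN hωq hωT hωY hωTY
  rw [hωT, hωY, hωTY]
  have hae : ∀ᵐ x ∂(κ ω), x ∉ N := measure_eq_zero_iff_ae_notMem.mp hωN
  -- rewrite the three integrals using the measurable modifications
  have e1 : ∫ y, T y * Y1 y ∂(κ ω) = ∫ y in A, f' y ∂(κ ω) := by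
    rw [← integral_indicator hAmeas]
    refine integral_congr_ae ?_
    filter_upwards [hae] with x hx
    obtain ⟨h1, h2⟩ := hout x hx
    rcases hTbin x with h0 | h0
    · have hxA : x ∉ A := by simp [hAdef, Set.mem_preimage, ← h1, h0]
      simp [hxA, h0]
    · have hxA : x ∈ A := by simp [hAdef, Set.mem_preimage, ← h1, h0]
      simp [hxA, h0, h2]
  have e2 : ∫ y, T y ∂(κ ω) = (κ ω A).toReal := by
    have h : ∫ y, T y ∂(κ ω) = ∫ y, A.indicator (fun _ => (1 : ℝ)) y ∂(κ ω) := by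
      refine integral_congr_ae ?_
      filter_upwards [hae] with x hx
      obtain ⟨h1, _⟩ := hout x hx
      rcases hTbin x with h0 | h0
      · have hxA : x ∉ A := by simp [hAdef, Set.mem_preimage, ← h1, h0]
        simp [hxA, h0]
      · have hxA : x ∈ A := by simp [hAdef, Set.mem_preimage, ← h1, h0]
        simp [hxA, h0]
    rw [h, integral_indicator_const _ hAmeas]
    simp
    rfl
  have e3 : ∫ y, Y1 y ∂(κ ω) = ∫ y, f' y ∂(κ ω) := by
    refine integral_congr_ae ?_
    filter_upwards [hae] with x hx
    exact (hout x hx).2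
  -- product rule on the π-system, transferred to the measurable modifications
  have hsets : ∀ q : ℚ, κ ω (f' ⁻¹' Iic (q : ℝ) ∩ A)
      = κ ω (f' ⁻¹' Iic (q : ℝ)) * κ ω A := by
    intro q
    have hs1 : κ ω (f' ⁻¹' Iic (q : ℝ) ∩ A) = κ ω (Y1 ⁻¹' Iic (q : ℝ) ∩ T ⁻¹' {1}) := by
      apply measure_congr
      filter_upwards [hae] with x hx
      obtain ⟨h1, h2⟩ := hout x hx
      have : (x ∈ f' ⁻¹' Iic (q : ℝ) ∩ A) ↔ (x ∈ Y1 ⁻¹' Iic (q : ℝ) ∩ T ⁻¹' {1}) := by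
        simp [hAdef, Set.mem_preimage, ← h1, ← h2]
      exact propext this
    have hs2 : κ ω (f' ⁻¹' Iic (q : ℝ)) = κ ω (Y1 ⁻¹' Iic (q : ℝ)) := by
      apply measure_congr
      filter_upwards [hae] with x hx
      have h2 := (hout x hx).2
      have : (x ∈ f' ⁻¹' Iic (q : ℝ)) ↔ (x ∈ Y1 ⁻¹' Iic (q : ℝ)) := by
        simp [Set.mem_preimage, ← h2]
      exact propext this
    have hs3 : κ ω A = κ ω (T ⁻¹' {1}) := by
      apply measure_congr
      filter_upwards [hae] with x hx
      have h1 := (hout x hx).1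
      have : (x ∈ A) ↔ (x ∈ T ⁻¹' {1}) := by
        simp [hAdef, Set.mem_preimage, ← h1]
      exact propext this
    rw [hs1, hs2, hs3]
    exact hωq q
  -- measure equality via the π-system of rational Iic intervals
  have hmapeq : ((κ ω).restrict A).map f' = (κ ω A) • ((κ ω).map f') := by
    haveI h1 : IsFiniteMeasure (((κ ω).restrict A).map f') := by
      constructor
      rw [Measure.map_apply hf'meas.measurable MeasurableSet.univ]
      exact lt_of_le_of_lt (measure_mono (Set.subset_univ _)) (measure_lt_top _ _)
    haveI h2 : IsFiniteMeasure ((κ ω A) • ((κ ω).map f')) := by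
      constructor
      rw [Measure.smul_apply, smul_eq_mul,
        Measure.map_apply hf'meas.measurable MeasurableSet.univ]
      exact ENNReal.mul_lt_top (measure_lt_top _ _) (measure_lt_top _ _)
    refine ext_of_generate_finite (⋃ q : ℚ, {Iic (q : ℝ)})
      ((BorelSpace.measurable_eq (α := ℝ)).trans Real.borel_eq_generateFrom_Iic_rat) ?_ ?_ ?_
    · rintro s hs t ht -
      simp only [Set.mem_iUnion, Set.mem_singleton_iff] at hs ht ⊢
      obtain ⟨q, rfl⟩ := hs; obtain ⟨r, rfl⟩ := ht
      exact ⟨min q r, by rw [Iic_inter_Iic]; norm_cast⟩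
    · intro s hs
      simp only [Set.mem_iUnion, Set.mem_singleton_iff] at hs
      obtain ⟨q, rfl⟩ := hs
      rw [Measure.map_apply hf'meas.measurable measurableSet_Iic,
        Measure.restrict_apply (hf'meas.measurable measurableSet_Iic),
        Measure.smul_apply, smul_eq_mul,
        Measure.map_apply hf'meas.measurable measurableSet_Iic, hsets q]
      exact mul_comm _ _
    · rw [Measure.map_apply hf'meas.measurable MeasurableSet.univ,
        Measure.smul_apply, smul_eq_mul,
        Measure.map_apply hf'meas.measurable MeasurableSet.univ]
      simp [Measure.restrict_apply MeasurableSet.univ]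
  have e4 : ∫ y in A, f' y ∂(κ ω) = (κ ω A).toReal * ∫ y, f' y ∂(κ ω) := by
    have hid : ∀ (ν : Measure Ω), ∫ y, f' y ∂ν = ∫ x, id x ∂(ν.map f') := fun ν =>
      (integral_map hf'meas.measurable.aemeasurable
        stronglyMeasurable_id.aestronglyMeasurable).symm
    calc ∫ y in A, f' y ∂(κ ω) = ∫ x, id x ∂(((κ ω).restrict A).map f') := hid _
      _ = ∫ x, id x ∂((κ ω A) • ((κ ω).map f')) := by rw [hmapeq]
      _ = (κ ω A).toReal * ∫ x, id x ∂((κ ω).map f') := by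
          rw [integral_smul_measure]; rw [smul_eq_mul]
      _ = (κ ω A).toReal * ∫ y, f' y ∂(κ ω) := by rw [← hid]
  rw [e1, e2, e3, e4]

/-- Cauchy–Schwarz for integrals of real functions in `L²`. -/
lemma integral_abs_mul_abs_le {Ω : Type*} {mΩ : MeasurableSpace Ω} (μ : Measure Ω)
    (u v : Ω → ℝ) (hu : MemLp u 2 μ) (hv : MemLp v 2 μ) :
    ∫ ω, |u ω| * |v ω| ∂μ
      ≤ Real.sqrt (∫ ω, u ω ^ 2 ∂μ) * Real.sqrt (∫ ω, v ω ^ 2 ∂μ) := by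
  have hu' : MemLp (fun ω => |u ω|) 2 μ := by simpa [Real.norm_eq_abs] using hu.norm
  have hv' : MemLp (fun ω => |v ω|) 2 μ := by simpa [Real.norm_eq_abs] using hv.norm
  set W : Lp ℝ 2 μ := hu'.toLp _ with hWdef
  set Z : Lp ℝ 2 μ := hv'.toLp _ with hZdef
  have hinner : (inner ℝ W Z : ℝ) = ∫ ω, |u ω| * |v ω| ∂μ := by
    rw [L2.inner_def]
    refine integral_congr_ae ?_
    filter_upwards [hu'.coeFn_toLp, hv'.coeFn_toLp] with ω h1 h2
    simp only [RCLike.inner_apply, conj_trivial]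
    rw [← hWdef, ← hZdef] at *
    rw [h1, h2, mul_comm]
  have hnormW : ‖W‖ = Real.sqrt (∫ ω, u ω ^ 2 ∂μ) := by
    have h1 : (inner ℝ W W : ℝ) = ∫ ω, u ω ^ 2 ∂μ := by
      rw [L2.inner_def]
      refine integral_congr_ae ?_
      filter_upwards [hu'.coeFn_toLp] with ω h1
      simp only [RCLike.inner_apply, conj_trivial]
      rw [← hWdef] at *
      rw [h1, abs_mul_abs_self, ← pow_two]
    rw [← h1, real_inner_self_eq_norm_mul_norm, Real.sqrt_mul_self (norm_nonneg _)]
  have hnormZ : ‖Z‖ = Real.sqrt (∫ ω, v ω ^ 2 ∂μ) := by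
    have h1 : (inner ℝ Z Z : ℝ) = ∫ ω, v ω ^ 2 ∂μ := by
      rw [L2.inner_def]
      refine integral_congr_ae ?_
      filter_upwards [hv'.coeFn_toLp] with ω h1
      simp only [RCLike.inner_apply, conj_trivial]
      rw [← hZdef] at *
      rw [h1, abs_mul_abs_self, ← pow_two]
    rw [← h1, real_inner_self_eq_norm_mul_norm, Real.sqrt_mul_self (norm_nonneg _)]
  calc ∫ ω, |u ω| * |v ω| ∂μ = (inner ℝ W Z : ℝ) := hinner.symm
    _ ≤ |(inner ℝ W Z : ℝ)| := le_abs_self _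
    _ ≤ ‖W‖ * ‖Z‖ := abs_real_inner_le_norm _ _
    _ = _ := by rw [hnormW, hnormZ]

/-- Bias of the AIPW functional: with true `e = E[T|𝒢]`, true `m₁`
(`E[TY|𝒢] = m₁ e` a.e.), and working models `m̄₁, ē` (`𝒢`-measurable, `ē ≥ c > 0` a.s.),
the population bias equals `E[((e−ē)/ē)(m₁−m̄₁)]`, and hence is bounded by
`c⁻¹ E[(e−ē)²]^{1/2} E[(m₁−m̄₁)²]^{1/2}` by Cauchy–Schwarz. -/
theorem stmt_6 {Ω : Type*} {mΩ : MeasurableSpace Ω} [StandardBorelSpace Ω]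
    (μ : Measure Ω) [IsProbabilityMeasure μ]
    (𝒢 : MeasurableSpace Ω) (h𝒢 : 𝒢 ≤ mΩ)
    (Y1 Y0 T Y m1 m1bar ebar : Ω → ℝ) (c : ℝ) (hc : 0 < c)
    (hTbin : ∀ ω, T ω = 0 ∨ T ω = 1)
    (hcons : ∀ ω, Y ω = T ω * Y1 ω + (1 - T ω) * Y0 ω)
    (hunconf : CondIndepFun 𝒢 h𝒢 Y1 T μ)
    (he_pos : ∀ᵐ ω ∂μ, c ≤ (μ[T | 𝒢]) ω)
    (hm1_meas : StronglyMeasurable[𝒢] m1)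
    (hm1 : μ[fun ω => T ω * Y ω | 𝒢] =ᵐ[μ] fun ω => m1 ω * (μ[T | 𝒢]) ω)
    (hm1bar_meas : StronglyMeasurable[𝒢] m1bar)
    (hebar_meas : StronglyMeasurable[𝒢] ebar)
    (hebar_pos : ∀ᵐ ω ∂μ, c ≤ ebar ω)
    (hY1int : Integrable Y1 μ)
    (hTYint : Integrable (fun ω => T ω * Y ω) μ)
    (hm1sq : MemLp m1 2 μ) (hm1barsq : MemLp m1bar 2 μ)
    (hesq : MemLp (fun ω => (μ[T | 𝒢]) ω) 2 μ) (hebarsq : MemLp ebar 2 μ)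
    (hAIPWint : Integrable
      (fun ω => T ω * Y ω / ebar ω - (T ω - ebar ω) * m1bar ω / ebar ω) μ)
    (hdriftint : Integrable
      (fun ω => ((μ[T | 𝒢]) ω - ebar ω) / ebar ω * (m1 ω - m1bar ω)) μ) :
    (∫ ω, (T ω * Y ω / ebar ω - (T ω - ebar ω) * m1bar ω / ebar ω) ∂μ)
        - ∫ ω, Y1 ω ∂μ
      = ∫ ω, ((μ[T | 𝒢]) ω - ebar ω) / ebar ω * (m1 ω - m1bar ω) ∂μ ∧
    |(∫ ω, (T ω * Y ω / ebar ω - (T ω - ebar ω) * m1bar ω / ebar ω) ∂μ)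
        - ∫ ω, Y1 ω ∂μ| ≤
      c⁻¹ * Real.sqrt (∫ ω, ((μ[T | 𝒢]) ω - ebar ω) ^ 2 ∂μ)
        * Real.sqrt (∫ ω, (m1 ω - m1bar ω) ^ 2 ∂μ) := by
  haveI : (ae μ).NeBot := ae_neBot.mpr (IsProbabilityMeasure.ne_zero μ)
  -- T is integrable (otherwise μ[T|𝒢] = 0 contradicts he_pos)
  have hTint : Integrable T μ := by
    by_contra hTint
    have h0 : μ[T | 𝒢] = 0 := condExp_of_not_integrable hTint
    rw [h0] at he_pos
    obtain ⟨ω, hω⟩ := he_pos.exists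
    simp only [Pi.zero_apply] at hω
    exact absurd hω (not_le.mpr hc)
  -- T * Y = T * Y1 pointwise
  have hTY1 : (fun ω => T ω * Y ω) = fun ω => T ω * Y1 ω := by
    funext ω
    rcases hTbin ω with h | h <;> rw [hcons ω, h] <;> ring
  have hTY1int : Integrable (fun ω => T ω * Y1 ω) μ := hTY1 ▸ hTYint
  -- factorization of the conditional expectation
  have hprod := condexp_mul_of_condIndep (𝒢 := 𝒢) (mΩ := mΩ) μ h𝒢 Y1 T hTbin hunconf hY1int hTint hTY1int
  have hm1'' : (fun ω => m1 ω * (μ[T | 𝒢]) ω) =ᵐ[μ]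
      fun ω => (μ[T | 𝒢]) ω * (μ[Y1 | 𝒢]) ω := by
    have h := hm1
    rw [hTY1] at h
    exact h.symm.trans hprod
  have hm1eq : m1 =ᵐ[μ] μ[Y1 | 𝒢] := by
    filter_upwards [hm1'', he_pos] with ω h1 h2
    have hne : (μ[T | 𝒢]) ω ≠ 0 := ne_of_gt (lt_of_lt_of_le hc h2)
    apply mul_right_cancel₀ hne
    rw [h1, mul_comm]
  have hm1int : Integrable m1 μ := integrable_condExp.congr hm1eq.symm
  have hYm1 : ∫ ω, Y1 ω ∂μ = ∫ ω, m1 ω ∂μ := by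
    rw [integral_congr_ae hm1eq]
    exact (integral_condExp h𝒢).symm
  -- integrability and pull-out properties for the AIPW pieces
  have hg1meas : AEStronglyMeasurable[mΩ] (fun ω => (ebar ω)⁻¹) μ :=
    ((hebar_meas.mono h𝒢).measurable.inv).stronglyMeasurable.aestronglyMeasurable
  have hg1bdd : ∀ᵐ ω ∂μ, ‖(ebar ω)⁻¹‖ ≤ c⁻¹ := by
    filter_upwards [hebar_pos] with ω h
    rw [Real.norm_eq_abs, abs_inv, abs_of_pos (lt_of_lt_of_le hc h)]
    exact inv_anti₀ hc h
  have h1int : Integrable (fun ω => (ebar ω)⁻¹ * (T ω * Y ω)) μ :=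
    hTYint.bdd_mul hg1meas hg1bdd
  have hm1bar_int : Integrable m1bar μ := hm1barsq.integrable one_le_two
  have h2int : Integrable (fun ω => (m1bar ω * (ebar ω)⁻¹) * T ω) μ := by
    have hb : ∀ᵐ ω ∂μ, ‖(ebar ω)⁻¹ * T ω‖ ≤ c⁻¹ := by
      filter_upwards [hebar_pos] with ω h
      rw [norm_mul]
      have hb1 : ‖(ebar ω)⁻¹‖ ≤ c⁻¹ := by
        rw [Real.norm_eq_abs, abs_inv, abs_of_pos (lt_of_lt_of_le hc h)]
        exact inv_anti₀ hc h
      have hb2 : ‖T ω‖ ≤ 1 := by rcases hTbin ω with h0 | h0 <;> simp [h0]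
      calc ‖(ebar ω)⁻¹‖ * ‖T ω‖ ≤ c⁻¹ * 1 :=
            mul_le_mul hb1 hb2 (norm_nonneg _) (by positivity)
        _ = c⁻¹ := mul_one _
    have h := hm1bar_int.bdd_mul (hg1meas.mul hTint.1) hb
    exact h.congr (Eventually.of_forall fun ω => by simp only [Pi.mul_apply]; ring)
  have hcond1 : μ[fun ω => (ebar ω)⁻¹ * (T ω * Y ω) | 𝒢] =ᵐ[μ]
      fun ω => (ebar ω)⁻¹ * (μ[fun ω' => T ω' * Y ω' | 𝒢]) ω :=
    condExp_mul_of_stronglyMeasurable_left (hebar_meas.measurable.inv).stronglyMeasurable h1int hTYint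
  have hcond2 : μ[fun ω => (m1bar ω * (ebar ω)⁻¹) * T ω | 𝒢] =ᵐ[μ]
      fun ω => (m1bar ω * (ebar ω)⁻¹) * (μ[T | 𝒢]) ω :=
    condExp_mul_of_stronglyMeasurable_left (hm1bar_meas.mul (hebar_meas.measurable.inv).stronglyMeasurable) h2int hTint
  have hG1 : μ[fun ω => (ebar ω)⁻¹ * (T ω * Y ω) | 𝒢] =ᵐ[μ]
      fun ω => (ebar ω)⁻¹ * (m1 ω * (μ[T | 𝒢]) ω) := by
    refine hcond1.trans ?_
    filter_upwards [hm1] with ω h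
    rw [h]
  have hG1int : Integrable (fun ω => (ebar ω)⁻¹ * (m1 ω * (μ[T | 𝒢]) ω)) μ :=
    integrable_condExp.congr hG1
  have hG2int : Integrable (fun ω => (m1bar ω * (ebar ω)⁻¹) * (μ[T | 𝒢]) ω) μ :=
    integrable_condExp.congr hcond2
  have i1 : ∫ ω, (ebar ω)⁻¹ * (T ω * Y ω) ∂μ
      = ∫ ω, (ebar ω)⁻¹ * (m1 ω * (μ[T | 𝒢]) ω) ∂μ := by
    calc ∫ ω, (ebar ω)⁻¹ * (T ω * Y ω) ∂μ
        = ∫ ω, (μ[fun ω' => (ebar ω')⁻¹ * (T ω' * Y ω') | 𝒢]) ω ∂μ :=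
          (integral_condExp h𝒢).symm
      _ = ∫ ω, (ebar ω)⁻¹ * (m1 ω * (μ[T | 𝒢]) ω) ∂μ := integral_congr_ae hG1
  have i2 : ∫ ω, (m1bar ω * (ebar ω)⁻¹) * T ω ∂μ
      = ∫ ω, (m1bar ω * (ebar ω)⁻¹) * (μ[T | 𝒢]) ω ∂μ := by
    calc ∫ ω, (m1bar ω * (ebar ω)⁻¹) * T ω ∂μ
        = ∫ ω, (μ[fun ω' => (m1bar ω' * (ebar ω')⁻¹) * T ω' | 𝒢]) ω ∂μ :=
          (integral_condExp h𝒢).symm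
      _ = ∫ ω, (m1bar ω * (ebar ω)⁻¹) * (μ[T | 𝒢]) ω ∂μ := integral_congr_ae hcond2
  -- decompose the AIPW integral
  have hdecomp : (fun ω => T ω * Y ω / ebar ω - (T ω - ebar ω) * m1bar ω / ebar ω) =ᵐ[μ]
      fun ω => (ebar ω)⁻¹ * (T ω * Y ω) - (m1bar ω * (ebar ω)⁻¹) * T ω + m1bar ω := by
    filter_upwards [hebar_pos] with ω h
    have hne : ebar ω ≠ 0 := ne_of_gt (lt_of_lt_of_le hc h)
    field_simp
    ring
  have hAIPWeq : ∫ ω, (T ω * Y ω / ebar ω - (T ω - ebar ω) * m1bar ω / ebar ω) ∂μ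
      = (∫ ω, (ebar ω)⁻¹ * (m1 ω * (μ[T | 𝒢]) ω) ∂μ)
        - (∫ ω, (m1bar ω * (ebar ω)⁻¹) * (μ[T | 𝒢]) ω ∂μ) + ∫ ω, m1bar ω ∂μ := by
    have hsub : Integrable
        (fun ω => (ebar ω)⁻¹ * (T ω * Y ω) - (m1bar ω * (ebar ω)⁻¹) * T ω) μ :=
      h1int.sub h2int
    rw [integral_congr_ae hdecomp]
    rw [integral_add hsub hm1bar_int, integral_sub h1int h2int, i1, i2]
  -- the key identity
  have key : (∫ ω, (T ω * Y ω / ebar ω - (T ω - ebar ω) * m1bar ω / ebar ω) ∂μ)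
      - ∫ ω, Y1 ω ∂μ
      = ∫ ω, ((μ[T | 𝒢]) ω - ebar ω) / ebar ω * (m1 ω - m1bar ω) ∂μ := by
    have hI1 : Integrable (fun ω => (ebar ω)⁻¹ * (m1 ω * (μ[T | 𝒢]) ω)
        - (m1bar ω * (ebar ω)⁻¹) * (μ[T | 𝒢]) ω) μ := hG1int.sub hG2int
    have hI2 : Integrable (fun ω => ((ebar ω)⁻¹ * (m1 ω * (μ[T | 𝒢]) ω)
        - (m1bar ω * (ebar ω)⁻¹) * (μ[T | 𝒢]) ω) + m1bar ω) μ := hI1.add hm1bar_int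
    have hcomb : ∫ ω, (((ebar ω)⁻¹ * (m1 ω * (μ[T | 𝒢]) ω)
          - (m1bar ω * (ebar ω)⁻¹) * (μ[T | 𝒢]) ω + m1bar ω) - m1 ω) ∂μ
        = (∫ ω, (ebar ω)⁻¹ * (m1 ω * (μ[T | 𝒢]) ω) ∂μ)
          - (∫ ω, (m1bar ω * (ebar ω)⁻¹) * (μ[T | 𝒢]) ω ∂μ)
          + (∫ ω, m1bar ω ∂μ) - ∫ ω, m1 ω ∂μ := by
      rw [integral_sub hI2 hm1int, integral_add hI1 hm1bar_int, integral_sub hG1int hG2int]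
    rw [hAIPWeq, hYm1, ← hcomb]
    refine integral_congr_ae ?_
    filter_upwards [hebar_pos] with ω h
    have hne : ebar ω ≠ 0 := ne_of_gt (lt_of_lt_of_le hc h)
    field_simp
    ring
  refine ⟨key, ?_⟩
  rw [key]
  -- Cauchy–Schwarz part
  have hu2 : MemLp (fun ω => (μ[T | 𝒢]) ω - ebar ω) 2 μ := hesq.sub hebarsq
  have hv2 : MemLp (fun ω => m1 ω - m1bar ω) 2 μ := hm1sq.sub hm1barsq
  have humeas : StronglyMeasurable[mΩ] (fun ω => (μ[T | 𝒢]) ω - ebar ω) :=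
    (stronglyMeasurable_condExp.mono h𝒢).sub (hebar_meas.mono h𝒢)
  have hvmeas : StronglyMeasurable[mΩ] (fun ω => m1 ω - m1bar ω) :=
    (hm1_meas.mono h𝒢).sub (hm1bar_meas.mono h𝒢)
  have hu2' : MemLp (fun ω => |(μ[T | 𝒢]) ω - ebar ω|) 2 μ := by
    simpa [Real.norm_eq_abs] using hu2.norm
  have hv2' : MemLp (fun ω => |m1 ω - m1bar ω|) 2 μ := by
    simpa [Real.norm_eq_abs] using hv2.norm
  have habs_int : Integrable
      (fun ω => |(μ[T | 𝒢]) ω - ebar ω| * |m1 ω - m1bar ω|) μ := by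
    have h1 : AEStronglyMeasurable[mΩ] (fun ω => |(μ[T | 𝒢]) ω - ebar ω|) μ := by
      simpa [Real.norm_eq_abs] using hu2.aestronglyMeasurable.norm
    have h2 : AEStronglyMeasurable[mΩ] (fun ω => |m1 ω - m1bar ω|) μ := by
      simpa [Real.norm_eq_abs] using hv2.aestronglyMeasurable.norm
    refine Integrable.mono' ((hu2.integrable_sq.add hv2.integrable_sq).div_const 2)
      (h1.mul h2) ?_
    filter_upwards with ω
    simp only [Pi.add_apply]
    rw [Real.norm_eq_abs, abs_mul, abs_abs, abs_abs]
    nlinarith [sq_nonneg (|(μ[T | 𝒢]) ω - ebar ω| - |m1 ω - m1bar ω|),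
      sq_abs ((μ[T | 𝒢]) ω - ebar ω), sq_abs (m1 ω - m1bar ω)]
  have hCS : ∫ ω, |(μ[T | 𝒢]) ω - ebar ω| * |m1 ω - m1bar ω| ∂μ
      ≤ Real.sqrt (∫ ω, ((μ[T | 𝒢]) ω - ebar ω) ^ 2 ∂μ)
        * Real.sqrt (∫ ω, (m1 ω - m1bar ω) ^ 2 ∂μ) :=
    integral_abs_mul_abs_le μ _ _ hu2 hv2
  -- a.e. bound on the drift term
  have hbnd : ∀ᵐ ω ∂μ, |((μ[T | 𝒢]) ω - ebar ω) / ebar ω * (m1 ω - m1bar ω)|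
      ≤ c⁻¹ * (|(μ[T | 𝒢]) ω - ebar ω| * |m1 ω - m1bar ω|) := by
    filter_upwards [hebar_pos] with ω h
    have h0 : 0 < ebar ω := lt_of_lt_of_le hc h
    rw [abs_mul, abs_div, abs_of_pos h0]
    calc |(μ[T | 𝒢]) ω - ebar ω| / ebar ω * |m1 ω - m1bar ω|
        ≤ |(μ[T | 𝒢]) ω - ebar ω| / c * |m1 ω - m1bar ω| := by gcongr
      _ = c⁻¹ * (|(μ[T | 𝒢]) ω - ebar ω| * |m1 ω - m1bar ω|) := by
          rw [div_eq_inv_mul]; ring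
  calc |∫ ω, ((μ[T | 𝒢]) ω - ebar ω) / ebar ω * (m1 ω - m1bar ω) ∂μ|
      ≤ ∫ ω, |((μ[T | 𝒢]) ω - ebar ω) / ebar ω * (m1 ω - m1bar ω)| ∂μ := by
        have h := norm_integral_le_integral_norm (μ := μ)
          (fun ω => ((μ[T | 𝒢]) ω - ebar ω) / ebar ω * (m1 ω - m1bar ω))
        simpa only [Real.norm_eq_abs] using h
    _ ≤ ∫ ω, c⁻¹ * (|(μ[T | 𝒢]) ω - ebar ω| * |m1 ω - m1bar ω|) ∂μ :=
        integral_mono_ae hdriftint.abs (habs_int.const_mul _) hbnd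
    _ = c⁻¹ * ∫ ω, |(μ[T | 𝒢]) ω - ebar ω| * |m1 ω - m1bar ω| ∂μ := integral_const_mul _ _
    _ ≤ c⁻¹ * (Real.sqrt (∫ ω, ((μ[T | 𝒢]) ω - ebar ω) ^ 2 ∂μ)
        * Real.sqrt (∫ ω, (m1 ω - m1bar ω) ^ 2 ∂μ)) :=
        mul_le_mul_of_nonneg_left hCS (by positivity)
    _ = _ := by ring
end
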